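/- In ℂ(x)[∂], the operators A1 = ∂⁴ − (8/x²)∂² + (24/x³)∂ − 24/x⁴ and A2 = ∂⁵ − (10/x²)∂³ + (40/x³)∂² − (80/x⁴)∂ + 80/x⁵ commute with each other. -/

import Mathlib

open RatFunc

/-- The derivation `d/dx` on the differential field `ℂ(x)` of rational functions,
given by the quotient rule on the (coprime) numerator and denominator. -/
noncomputable def ratD (f : RatFunc ℂ) : RatFunc ℂ :=
  (algebraMap (Polynomial ℂ) (RatFunc ℂ) (Polynomial.derivative f.num)
      * algebraMap (Polynomial ℂ) (RatFunc ℂ) f.denom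
    - algebraMap (Polynomial ℂ) (RatFunc ℂ) f.num
      * algebraMap (Polynomial ℂ) (RatFunc ℂ) (Polynomial.derivative f.denom))
    / algebraMap (Polynomial ℂ) (RatFunc ℂ) f.denom ^ 2

namespace RatDAux

open Polynomial

local notation "α" => algebraMap (Polynomial ℂ) (RatFunc ℂ)

lemma ratD_eq_div (p q : Polynomial ℂ) (hq : q ≠ 0) :
    ratD (α p / α q)
      = (α (derivative p) * α q - α p * α (derivative q)) / α q ^ 2 := by
  set f : RatFunc ℂ := α p / α q with hf
  clear_value f
  have hd : f.denom ≠ 0 := denom_ne_zero f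
  have hdα : α f.denom ≠ 0 := algebraMap_ne_zero hd
  have hqα : α q ≠ 0 := algebraMap_ne_zero hq
  have h1 : f.num * q = p * f.denom := by
    have this : α f.num / α f.denom = α p / α q := by rw [num_div_denom, hf]
    rw [div_eq_div_iff hdα hqα] at this
    exact RatFunc.algebraMap_injective ℂ (by push_cast [map_mul]; exact this)
  have h2 : derivative f.num * q + f.num * derivative q
      = derivative p * f.denom + p * derivative f.denom := by
    have := congrArg derivative h1
    simpa [derivative_mul] using this
  unfold ratD
  rw [div_eq_div_iff (pow_ne_zero 2 hdα) (pow_ne_zero 2 hqα)]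
  have H1 := congrArg α h1
  have H2 := congrArg α h2
  simp only [map_mul, map_add] at H1 H2
  linear_combination (-(α (derivative q)) * α f.denom - α (derivative f.denom) * α q) * H1
    + (α f.denom * α q) * H2

lemma ratD_algebraMap (p : Polynomial ℂ) : ratD (α p) = α (derivative p) := by
  have := ratD_eq_div p 1 one_ne_zero
  simpa using this

@[simp] lemma ratD_X : ratD (RatFunc.X : RatFunc ℂ) = 1 := by
  have := ratD_algebraMap Polynomial.X
  simpa [RatFunc.algebraMap_X] using this

@[simp] lemma ratD_one : ratD (1 : RatFunc ℂ) = 0 := by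
  simpa using ratD_algebraMap 1

@[simp] lemma ratD_zero : ratD (0 : RatFunc ℂ) = 0 := by
  simpa using ratD_algebraMap 0

@[simp] lemma ratD_ofNat (n : ℕ) [n.AtLeastTwo] :
    ratD (no_index (OfNat.ofNat n) : RatFunc ℂ) = 0 := by
  have := ratD_algebraMap (OfNat.ofNat n : Polynomial ℂ)
  simpa [map_ofNat] using this

@[simp] lemma ratD_natCast (n : ℕ) : ratD (n : RatFunc ℂ) = 0 := by
  have := ratD_algebraMap (n : Polynomial ℂ)
  simpa using this

@[simp] lemma ratD_X_pow (n : ℕ) :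
    ratD ((RatFunc.X : RatFunc ℂ) ^ n) = (n : RatFunc ℂ) * RatFunc.X ^ (n - 1) := by
  have := ratD_algebraMap (Polynomial.X ^ n)
  simp only [derivative_X_pow] at this
  simp only [map_mul, map_pow, RatFunc.algebraMap_X, RatFunc.algebraMap_C] at this
  rw [this, map_natCast]

lemma exists_rep (f : RatFunc ℂ) : ∃ p q : Polynomial ℂ, q ≠ 0 ∧ f = α p / α q :=
  ⟨f.num, f.denom, f.denom_ne_zero, (f.num_div_denom).symm⟩

@[simp] lemma ratD_add (f g : RatFunc ℂ) : ratD (f + g) = ratD f + ratD g := by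
  obtain ⟨p1, q1, hq1, rfl⟩ := exists_rep f
  obtain ⟨p2, q2, hq2, rfl⟩ := exists_rep g
  have hq1' : α q1 ≠ 0 := algebraMap_ne_zero hq1
  have hq2' : α q2 ≠ 0 := algebraMap_ne_zero hq2
  have hsum : α p1 / α q1 + α p2 / α q2 = α (p1 * q2 + p2 * q1) / α (q1 * q2) := by
    field_simp
    simp only [map_mul, map_add]
    ring
  rw [hsum, ratD_eq_div _ _ (mul_ne_zero hq1 hq2), ratD_eq_div _ _ hq1,
    ratD_eq_div _ _ hq2]
  simp only [map_mul, map_add, derivative_mul, derivative_add]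
  field_simp
  ring

@[simp] lemma ratD_mul (f g : RatFunc ℂ) : ratD (f * g) = ratD f * g + f * ratD g := by
  obtain ⟨p1, q1, hq1, rfl⟩ := exists_rep f
  obtain ⟨p2, q2, hq2, rfl⟩ := exists_rep g
  have hq1' : α q1 ≠ 0 := algebraMap_ne_zero hq1
  have hq2' : α q2 ≠ 0 := algebraMap_ne_zero hq2
  have hmul : α p1 / α q1 * (α p2 / α q2) = α (p1 * p2) / α (q1 * q2) := by
    field_simp
    simp only [map_mul]
    ring
  rw [hmul, ratD_eq_div _ _ (mul_ne_zero hq1 hq2), ratD_eq_div _ _ hq1,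
    ratD_eq_div _ _ hq2]
  simp only [map_mul, map_add, derivative_mul]
  field_simp
  ring

@[simp] lemma ratD_neg (f : RatFunc ℂ) : ratD (-f) = -ratD f := by
  have h := ratD_add f (-f)
  simp only [add_neg_cancel, ratD_zero] at h
  linear_combination -h

@[simp] lemma ratD_sub (f g : RatFunc ℂ) : ratD (f - g) = ratD f - ratD g := by
  rw [sub_eq_add_neg, ratD_add, ratD_neg, sub_eq_add_neg]

lemma ratD_inv (g : RatFunc ℂ) (hg : g ≠ 0) : ratD g⁻¹ = -ratD g / g ^ 2 := by
  have h : ratD (g * g⁻¹) = 0 := by rw [mul_inv_cancel₀ hg, ratD_one]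
  rw [ratD_mul] at h
  rw [eq_div_iff (pow_ne_zero 2 hg)]
  linear_combination g * h - ratD g * (mul_inv_cancel₀ hg)

@[simp] lemma ratD_div_X_pow (f : RatFunc ℂ) (n : ℕ) :
    ratD (f / (RatFunc.X : RatFunc ℂ) ^ n)
      = ratD f / RatFunc.X ^ n - (n : RatFunc ℂ) * f / RatFunc.X ^ (n + 1) := by
  have hX : (RatFunc.X : RatFunc ℂ) ≠ 0 := RatFunc.X_ne_zero
  have hXn : (RatFunc.X : RatFunc ℂ) ^ n ≠ 0 := pow_ne_zero _ hX
  rw [div_eq_mul_inv, ratD_mul, ratD_inv _ hXn, ratD_X_pow]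
  rcases n with _ | m
  · simp
  · have h1 : m + 1 - 1 = m := rfl
    rw [h1]
    field_simp
    ring

@[simp] lemma ratD_inv_X_pow (n : ℕ) :
    ratD ((RatFunc.X : RatFunc ℂ)⁻¹ ^ n)
      = -(n : RatFunc ℂ) * (RatFunc.X)⁻¹ ^ (n + 1) := by
  have hX : (RatFunc.X : RatFunc ℂ) ≠ 0 := RatFunc.X_ne_zero
  rcases n with _ | m
  · simp
  · have h : ((RatFunc.X : RatFunc ℂ))⁻¹ ^ (m + 1) = 1 / RatFunc.X ^ (m + 1) := by
      rw [inv_pow, one_div]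
    rw [h]
    have := ratD_div_X_pow 1 (m + 1)
    rw [this, ratD_one]
    have hXn : (RatFunc.X : RatFunc ℂ) ^ (m + 1) ≠ 0 := pow_ne_zero _ hX
    have hXn2 : (RatFunc.X : RatFunc ℂ) ^ (m + 2) ≠ 0 := pow_ne_zero _ hX
    field_simp
    have hk : (1 / (RatFunc.X : RatFunc ℂ)) ^ (m + 1 + 1) * RatFunc.X ^ (m + 1 + 1) = 1 := by
      rw [← mul_pow, one_div, inv_mul_cancel₀ hX, one_pow]
    linear_combination (RatFunc.X ^ (m + 1) * ((m + 1 : ℕ) : RatFunc ℂ)) * hk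

lemma it2 (g : RatFunc ℂ) : ratD^[2] g = ratD (ratD g) := rfl
lemma it3 (g : RatFunc ℂ) : ratD^[3] g = ratD (ratD (ratD g)) := rfl
lemma it4 (g : RatFunc ℂ) : ratD^[4] g = ratD (ratD (ratD (ratD g))) := rfl
lemma it5 (g : RatFunc ℂ) : ratD^[5] g = ratD (ratD (ratD (ratD (ratD g)))) := rfl

end RatDAux

/-- The operator `A₁ = ∂⁴ - (8/x²)∂² + (24/x³)∂ - 24/x⁴`. -/
noncomputable def opA1 (f : RatFunc ℂ) : RatFunc ℂ :=
  ratD^[4] f - 8 / X ^ 2 * ratD^[2] f + 24 / X ^ 3 * ratD f - 24 / X ^ 4 * f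

/-- The operator `A₂ = ∂⁵ - (10/x²)∂³ + (40/x³)∂² - (80/x⁴)∂ + 80/x⁵`. -/
noncomputable def opA2 (f : RatFunc ℂ) : RatFunc ℂ :=
  ratD^[5] f - 10 / X ^ 2 * ratD^[3] f + 40 / X ^ 3 * ratD^[2] f
    - 80 / X ^ 4 * ratD f + 80 / X ^ 5 * f

set_option maxHeartbeats 4000000 in
open RatDAux in
/-- `A₁` and `A₂` commute in `ℂ(x)[∂]`. -/
theorem stmt6 : ∀ f : RatFunc ℂ, opA1 (opA2 f) = opA2 (opA1 f) := by
  intro f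
  simp only [opA1, opA2, it2, it3, it4, it5, div_eq_mul_inv, ← inv_pow]
  simp only [ratD_add, ratD_sub, ratD_neg, ratD_mul, ratD_ofNat, ratD_natCast,
    ratD_X, ratD_one, ratD_zero, ratD_inv_X_pow]
  push_cast
  ring
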